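/- arXiv:0711.5020 — 3 statements merged into one kernel-verified Lean document; each statement's English description precedes it below -/
import Mathlib

section
/- Let p be an odd prime and let y generate H¹(BC_p; F_p). Then the triple Massey product ⟨y,y,y⟩ is a well-defined single element of H²(BC_p; F_p) (the indeterminacy is zero), and ⟨y,y,y⟩ = 0 if p > 3, while ⟨y,y,y⟩ = β(y) for p = 3, where β is the mod-p Bockstein. -/
private lemma lin_aux {p : ℕ} [NeZero p] (f : ZMod p → ZMod p)
    (hf : ∀ g h : ZMod p, f (g + h) = f g + f h) (g : ZMod p) :
    f g = f 1 * g := by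
  have h0 : f 0 = 0 := by have := hf 0 0; simpa using this
  have key : ∀ n : ℕ, f (n : ZMod p) = f 1 * (n : ZMod p) := by
    intro n
    induction n with
    | zero => simpa using h0
    | succ n ih =>
      have : ((n + 1 : ℕ) : ZMod p) = (n : ZMod p) + 1 := by push_cast; ring
      rw [this, hf, ih]; ring
  have hg : ((g.val : ℕ) : ZMod p) = g := by
    simp [ZMod.natCast_val, ZMod.cast_id]
  calc f g = f ((g.val : ℕ) : ZMod p) := by rw [hg]
    _ = f 1 * ((g.val : ℕ) : ZMod p) := key g.val
    _ = f 1 * g := by rw [hg]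

private lemma two_mul_two : (2 : ZMod 3) * 2 = 1 := by decide

private lemma key3 : ∀ c α β g h : ZMod 3,
    -(c * g * (-(c * c * 2) * (h * h) + β * h))
      - (-(c * c * 2) * (g * g) + α * g) * (c * h)
    = c * (((g.val + h.val) / 3 : ℕ) : ZMod 3)
      + ((c * (g * g - g) - c * (α + β) * (g * g))
        + (c * (h * h - h) - c * (α + β) * (h * h))
        - (c * ((g + h) * (g + h) - (g + h)) - c * (α + β) * ((g + h) * (g + h)))) := by
  decide

/-- Massey product `⟨y,y,y⟩` in `H*(BC_p; F_p)` for odd `p`, computed with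
inhomogeneous cochains for the group `C_p = ZMod p` with trivial coefficients `F_p`.
A `1`-cocycle is an additive function `y : ZMod p → ZMod p`; `y` generates
`H¹(BC_p; F_p)` iff `y ≠ 0`.  For `1`-cochains the differential is
`(δa)(g,h) = a g + a h - a (g+h)`, and the cup product of `1`-cochains `u, v` is
`(u⌣v)(g,h) = u g * v h`.

First conjunct (indeterminacy is zero): the cup product of `y` with any `1`-cocycle
is a coboundary, so `⟨y,y,y⟩` is a single well-defined element of `H²`.

Second conjunct: for any choices of `1`-cochains `a, b` with `δa = δb = y⌣y`,
the Massey representative `(-1)^{deg y}·(y⌣b) - a⌣y` represents `0` if `p > 3`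
and represents the Bockstein `β(y)` if `p = 3`; here `β(y)` is represented by the
carry cocycle `(g,h) ↦ y 1 * ((g.val + h.val) / p)`. -/
theorem stmt_4 (p : ℕ) (hp : p.Prime) (hodd : Odd p)
    (y : ZMod p → ZMod p) (hadd : ∀ g h : ZMod p, y (g + h) = y g + y h)
    (hy : y ≠ 0) :
    (∀ y' : ZMod p → ZMod p, (∀ g h : ZMod p, y' (g + h) = y' g + y' h) →
      ∃ t : ZMod p → ZMod p, ∀ g h : ZMod p, y g * y' h = t g + t h - t (g + h)) ∧
    (∀ a b : ZMod p → ZMod p,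
      (∀ g h : ZMod p, a g + a h - a (g + h) = y g * y h) →
      (∀ g h : ZMod p, b g + b h - b (g + h) = y g * y h) →
      ∃ s : ZMod p → ZMod p, ∀ g h : ZMod p,
        -(y g * b h) - a g * y h =
          (if p = 3 then y 1 * (((g.val + h.val) / p : ℕ) : ZMod p) else 0)
            + (s g + s h - s (g + h))) := by
  haveI : Fact p.Prime := ⟨hp⟩
  haveI : NeZero p := ⟨hp.ne_zero⟩
  have h2ne : (2 : ZMod p) ≠ 0 := by
    intro h
    have hdvd : p ∣ 2 := (ZMod.natCast_eq_zero_iff 2 p).mp (by exact_mod_cast h)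
    have hpe : p = 2 := (Nat.prime_dvd_prime_iff_eq hp Nat.prime_two).mp hdvd
    rw [hpe] at hodd
    simp [Nat.odd_iff] at hodd
  have h2 : (2 : ZMod p) * 2⁻¹ = 1 := mul_inv_cancel₀ h2ne
  have hyl : ∀ g, y g = y 1 * g := lin_aux y (fun g h => hadd g h)
  constructor
  · intro y' hy'
    have hy'l : ∀ g, y' g = y' 1 * g := lin_aux y' (fun g h => hy' g h)
    refine ⟨fun g => -(y 1 * y' 1 * 2⁻¹) * (g * g), fun g h => ?_⟩
    rw [hyl g, hy'l h]
    linear_combination (-(y 1 * y' 1 * g * h)) * h2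
  · intro a b ha hb
    have haform : ∀ g, a g = -(y 1 * y 1 * 2⁻¹) * (g * g) + (a 1 + y 1 * y 1 * 2⁻¹) * g := by
      set a' : ZMod p → ZMod p := fun g => a g + (y 1 * y 1 * 2⁻¹) * (g * g) with ha'
      have hadd' : ∀ g h : ZMod p, a' (g + h) = a' g + a' h := by
        intro g h
        have h1 := ha g h
        rw [hyl g, hyl h] at h1
        simp only [ha']
        linear_combination -h1 + (y 1 * y 1 * g * h) * h2
      intro g
      have := lin_aux a' hadd' g
      simp only [ha'] at this
      linear_combination this
    have hbform : ∀ g, b g = -(y 1 * y 1 * 2⁻¹) * (g * g) + (b 1 + y 1 * y 1 * 2⁻¹) * g := by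
      set b' : ZMod p → ZMod p := fun g => b g + (y 1 * y 1 * 2⁻¹) * (g * g) with hb'
      have hadd' : ∀ g h : ZMod p, b' (g + h) = b' g + b' h := by
        intro g h
        have h1 := hb g h
        rw [hyl g, hyl h] at h1
        simp only [hb']
        linear_combination -h1 + (y 1 * y 1 * g * h) * h2
      intro g
      have := lin_aux b' hadd' g
      simp only [hb'] at this
      linear_combination this
    set c := y 1 with hc
    set A := a 1 + c * c * 2⁻¹ with hA
    set B := b 1 + c * c * 2⁻¹ with hB
    by_cases hp3 : p = 3
    · subst hp3
      refine ⟨fun g => c * (g * g - g) - c * (A + B) * (g * g), fun g h => ?_⟩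
      have hinv : (2 : ZMod 3)⁻¹ = 2 := inv_eq_of_mul_eq_one_right two_mul_two
      rw [if_pos rfl, hyl g, hyl h, haform g, hbform h, hinv]
      have := key3 c A B g h
      linear_combination this
    · have h6ne : (6 : ZMod p) ≠ 0 := by
        intro h
        have hdvd : p ∣ 6 := (ZMod.natCast_eq_zero_iff 6 p).mp (by exact_mod_cast h)
        have hle : p ≤ 6 := Nat.le_of_dvd (by norm_num) hdvd
        have h2le : 2 ≤ p := hp.two_le
        interval_cases p <;>
          first
            | exact hp3 rfl
            | (revert hdvd; decide)
            | simp_all [Nat.odd_iff]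
            | norm_num at hdvd
            | norm_num at hp
      have h6 : (6 : ZMod p) * 6⁻¹ = 1 := mul_inv_cancel₀ h6ne
      refine ⟨fun g => -(c * c * c * 6⁻¹) * (g * g * g) + (c * (A + B) * 2⁻¹) * (g * g),
        fun g h => ?_⟩
      rw [if_neg hp3, hyl g, hyl h, haform g, hbform h]
      field_simp
      ring
end

section
/- Let p be an odd prime and consider the action of the cyclic group C_p on the polynomial ring F_p[α, β] (α, β of degree 2) where a generator fixes α and sends β to β + α. Then the fixed-point subring is generated by α and the element β^p − α^{p−1}β = ∏_{i=0}^{p−1}(β + iα); moreover a homogeneous element ∑_{i=1}^{m} λ_i α^{n−i} β^i with 1 ≤ m ≤ p−1 is fixed only if all λ_i = 0. -/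
open MvPolynomial

/-- The generator of the `C_p`-action on `F_p[α, β]` fixing `α = X 0` and sending
`β = X 1` to `β + α`. -/
noncomputable def sigmaGen (p : ℕ) :
    MvPolynomial (Fin 2) (ZMod p) →ₐ[ZMod p] MvPolynomial (Fin 2) (ZMod p) :=
  aeval ![X 0, X 1 + X 0]

section Stmt17Aux
variable (p : ℕ) [Fact p.Prime]

open Polynomial in
theorem univ_prod_aux :
    ∏ i ∈ Finset.range p, (Polynomial.X + Polynomial.C (i : ZMod p)) =
      Polynomial.X ^ p - Polynomial.X := by
  have hp1 : 1 < p := (Fact.out : p.Prime).one_lt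
  haveI : NeZero p := ⟨(Fact.out : p.Prime).ne_zero⟩
  have hcard : Fintype.card (ZMod p) = p := ZMod.card p
  have hmon : Polynomial.Monic (Polynomial.X ^ p - Polynomial.X : (ZMod p)[X]) := by
    apply Polynomial.monic_X_pow_sub
    rw [Polynomial.degree_X]
    exact_mod_cast hp1
  have hroots : (Polynomial.X ^ p - Polynomial.X : (ZMod p)[X]).roots = Finset.univ.val := by
    have := FiniteField.roots_X_pow_card_sub_X (ZMod p)
    rwa [hcard] at this
  have hsplits : Polynomial.Splits
      (Polynomial.X ^ p - Polynomial.X : (ZMod p)[X]) := by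
    rw [Polynomial.splits_iff_card_roots, hroots,
      FiniteField.X_pow_card_sub_X_natDegree_eq _ hp1]
    simpa using hcard
  have h1 : (Polynomial.X ^ p - Polynomial.X : (ZMod p)[X])
      = ∏ a : ZMod p, (Polynomial.X - Polynomial.C a) := by
    conv_lhs => rw [hsplits.eq_prod_roots_of_monic hmon]
    rw [hroots]
    rfl
  have h2 : ∏ a : ZMod p, (Polynomial.X - Polynomial.C a)
      = ∏ a : ZMod p, (Polynomial.X + Polynomial.C a) := by
    rw [← Equiv.prod_comp (Equiv.neg (ZMod p)) (fun a => Polynomial.X + Polynomial.C a)]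
    simp [sub_eq_add_neg]
  have h3 : ∏ a : ZMod p, (Polynomial.X + Polynomial.C a)
      = ∏ i ∈ Finset.range p, (Polynomial.X + Polynomial.C (i : ZMod p)) := by
    refine Finset.prod_nbij' (fun a => a.val) (fun i => (i : ZMod p)) ?_ ?_ ?_ ?_ ?_
    · intro a _; exact Finset.mem_range.2 (ZMod.val_lt a)
    · intro i _; exact Finset.mem_univ _
    · intro a _; simp [ZMod.natCast_val, ZMod.cast_id]
    · intro i hi; exact ZMod.val_cast_of_lt (Finset.mem_range.1 hi)
    · intro a _; rw [ZMod.natCast_val, ZMod.cast_id]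
  rw [← h3, ← h2, ← h1]

/-- For any element `u` of a commutative ring of characteristic `p`. -/
theorem prod_add_nat {A : Type*} [CommRing A] [CharP A p] (u : A) :
    ∏ i ∈ Finset.range p, (u + (i : A)) = u ^ p - u := by
  have := congrArg (Polynomial.eval₂ (ZMod.castHom (dvd_refl p) A) u) (univ_prod_aux p)
  simpa [Polynomial.eval₂_finset_prod, map_natCast] using this

open MvPolynomial in
theorem part1 :
    ∏ i ∈ Finset.range p, (X 1 + C (i : ZMod p) * X 0)
        = (X 1 ^ p - X 0 ^ (p - 1) * X 1 : MvPolynomial (Fin 2) (ZMod p)) := by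
  have hp1 : 1 < p := (Fact.out : p.Prime).one_lt
  set Mv := MvPolynomial (Fin 2) (ZMod p)
  haveI : CharP Mv p := charP_of_injective_algebraMap (MvPolynomial.C_injective (Fin 2) (ZMod p)) p
  set K := FractionRing Mv
  have hι : Function.Injective (algebraMap Mv K) := IsFractionRing.injective Mv K
  haveI : CharP K p := charP_of_injective_ringHom hι p
  apply hι
  set ι := algebraMap Mv K
  have ha : ι (X 0) ≠ 0 := fun h => by
    have : (X 0 : Mv) = 0 := hι (by simpa using h)
    exact MvPolynomial.X_ne_zero 0 this
  set a := ι (X 0)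
  set b := ι (X 1)
  set u := b / a with hu
  have hau : a * u = b := mul_div_cancel₀ b ha
  have key := prod_add_nat p u
  calc ι (∏ i ∈ Finset.range p, (X 1 + C (i : ZMod p) * X 0))
      = ∏ i ∈ Finset.range p, (b + (i : K) * a) := by
        rw [map_prod]
        refine Finset.prod_congr rfl fun i _ => ?_
        have : ((C (i : ZMod p) : Mv)) = (i : Mv) := by simp
        rw [map_add, map_mul, this, map_natCast]
    _ = ∏ i ∈ Finset.range p, (a * (u + (i : K))) := by
        refine Finset.prod_congr rfl fun i _ => ?_
        rw [mul_add, hau]; ring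
    _ = a ^ p * (u ^ p - u) := by
        rw [Finset.prod_mul_distrib, Finset.prod_const, Finset.card_range, key]
    _ = b ^ p - a ^ (p - 1) * b := by
        rw [mul_sub, ← mul_pow, hau]
        congr 1
        have : a ^ p = a ^ (p - 1) * a := by
          rw [← pow_succ]
          congr 1
          omega
        rw [this, mul_assoc, hau]
    _ = ι (X 1 ^ p - X 0 ^ (p - 1) * X 1) := by
        rw [map_sub, map_pow, map_mul, map_pow]

end Stmt17Aux


section Tau
variable (p : ℕ) [Fact p.Prime]

local notation "R'" => Polynomial (ZMod p)
local notation "S'" => Polynomial (Polynomial (ZMod p))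

/-- `β ↦ β + α` on `F_p[α][β]`. -/
noncomputable def tau : S' →ₐ[R'] S' := Polynomial.aeval (Polynomial.X + Polynomial.C Polynomial.X)

theorem tau_eq (f : S') : tau p f = Polynomial.taylor Polynomial.X f := by
  rw [Polynomial.taylor_apply, Polynomial.comp, tau, Polynomial.aeval_def, Polynomial.algebraMap_eq]

/-- A fixed element of `β`-degree `< p` is constant in `β`. -/
theorem lowdeg (f : S') (hd : f.natDegree < p) (hf : tau p f = f) :
    f = Polynomial.C (f.coeff 0) := by
  by_cases hd0 : f.natDegree = 0
  · exact (Polynomial.eq_C_of_natDegree_eq_zero hd0)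
  set d := f.natDegree with hdd
  have hfne : f ≠ 0 := fun h => hd0 (by simp [hdd, h])
  exfalso
  set g := Polynomial.hasseDeriv (d - 1) f with hg
  have hgc : ∀ n, g.coeff n = ↑((n + (d - 1)).choose (d - 1)) * f.coeff (n + (d - 1)) :=
    fun n => Polynomial.hasseDeriv_coeff _ _ _
  have hg1 : g.natDegree ≤ 1 := by
    rw [Polynomial.natDegree_le_iff_coeff_eq_zero]
    intro N hN
    rw [hgc, Polynomial.coeff_eq_zero_of_natDegree_lt (by omega), mul_zero]
  have hgrep : g = Polynomial.C (g.coeff 1) * Polynomial.X + Polynomial.C (g.coeff 0) :=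
    Polynomial.eq_X_add_C_of_natDegree_le_one hg1
  have hc1 : g.coeff 1 = (d : R') * f.coeff d := by
    rw [hgc]
    have h1d : 1 + (d - 1) = d := by omega
    rw [h1d]
    congr 2
    have h2 : d - 1 ≤ d := by omega
    have := Nat.choose_symm h2
    have h3 : d - (d - 1) = 1 := by omega
    rw [h3, Nat.choose_one_right] at this
    omega
  have hc0 : g.coeff 0 = f.coeff (d - 1) := by
    rw [hgc]; simp
  have heq : f.coeff (d - 1) = g.eval Polynomial.X := by
    have h := Polynomial.taylor_coeff (r := (Polynomial.X : R')) (f := f) (d - 1)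
    rwa [← tau_eq, hf] at h
  rw [hgrep] at heq
  simp only [Polynomial.eval_add, Polynomial.eval_mul, Polynomial.eval_C, Polynomial.eval_X,
    hc1, hc0] at heq
  have hz : (d : R') * f.coeff d * Polynomial.X = 0 := by
    have h := heq
    nth_rewrite 1 [← zero_add (f.coeff (d - 1))] at h
    exact (add_right_cancel h).symm
  have hX : (Polynomial.X : R') ≠ 0 := Polynomial.X_ne_zero
  rcases mul_eq_zero.mp hz with h | h
  · rcases mul_eq_zero.mp h with h' | h'
    · have hdz : (d : ZMod p) = 0 := by
        have h2 : Polynomial.C ((d : ZMod p)) = (0 : R') := by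
          rw [map_natCast]; exact h'
        exact Polynomial.C_eq_zero.mp h2
      have := (ZMod.natCast_eq_zero_iff d p).mp hdz
      have := Nat.le_of_dvd (by omega) this
      omega
    · exact (Polynomial.leadingCoeff_ne_zero.mpr hfne) h'
  · exact hX h



/-- The norm element `β^p - α^{p-1} β` in `F_p[α][β]`. -/
noncomputable def Nrm : S' :=
  Polynomial.X ^ p - Polynomial.C (Polynomial.X ^ (p - 1)) * Polynomial.X

theorem Nrm_monic : (Nrm p).Monic := by
  have hp1 : 1 < p := (Fact.out : p.Prime).one_lt
  apply Polynomial.monic_X_pow_sub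
  calc (Polynomial.C (Polynomial.X ^ (p-1) : R') * Polynomial.X).degree
      ≤ (Polynomial.C (Polynomial.X ^ (p-1) : R')).degree + (Polynomial.X : S').degree :=
        Polynomial.degree_mul_le _ _
    _ ≤ 0 + 1 := add_le_add Polynomial.degree_C_le Polynomial.degree_X_le
    _ < p := by
        rw [zero_add]
        exact_mod_cast hp1

theorem Nrm_degree : (Nrm p).degree = p := by
  have hp1 : 1 < p := (Fact.out : p.Prime).one_lt
  rw [Nrm]
  rw [Polynomial.degree_sub_eq_left_of_degree_lt, Polynomial.degree_X_pow]
  rw [Polynomial.degree_X_pow]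
  calc (Polynomial.C (Polynomial.X ^ (p-1) : R') * Polynomial.X).degree
      ≤ 0 + 1 := le_trans (Polynomial.degree_mul_le _ _)
        (add_le_add Polynomial.degree_C_le Polynomial.degree_X_le)
    _ < p := by rw [zero_add]; exact_mod_cast hp1

theorem Nrm_natDegree : (Nrm p).natDegree = p :=
  Polynomial.natDegree_eq_of_degree_eq_some (Nrm_degree p)

theorem charP_S : CharP S' p := by
  haveI : CharP (ZMod p) p := ZMod.charP p
  have hinj : Function.Injective
      ⇑((Polynomial.C : R' →+* S').comp (Polynomial.C : ZMod p →+* R')) := by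
    rw [RingHom.coe_comp]
    exact Polynomial.C_injective.comp Polynomial.C_injective
  exact charP_of_injective_ringHom hinj p

theorem tau_Nrm : tau p (Nrm p) = Nrm p := by
  haveI := charP_S p
  have hp1 : 1 < p := (Fact.out : p.Prime).one_lt
  rw [Nrm, map_sub, map_pow, map_mul]
  rw [tau, Polynomial.aeval_X]
  have hC : ∀ r : R', Polynomial.aeval (R := R')
      (Polynomial.X + Polynomial.C (Polynomial.X : R')) (Polynomial.C r) = Polynomial.C r := by
    intro r
    rw [Polynomial.aeval_C, Polynomial.algebraMap_eq]
  rw [hC]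
  rw [add_pow_char]
  have hXp : (Polynomial.C (Polynomial.X : R') : S') ^ p
      = Polynomial.C (Polynomial.X ^ (p-1)) * Polynomial.C (Polynomial.X : R') := by
    rw [← map_pow, ← map_mul, ← pow_succ]
    congr 2
    omega
  rw [hXp]
  ring

theorem tau_injective : Function.Injective (tau p) := by
  set tau' : S' →ₐ[R'] S' :=
    Polynomial.aeval (Polynomial.X - Polynomial.C Polynomial.X) with htau'
  have hcomp : ∀ f, tau' (tau p f) = f := by
    intro f
    have : tau'.comp (tau p) = AlgHom.id R' S' := by
      apply Polynomial.algHom_ext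
      simp [tau, htau']
    calc tau' (tau p f) = (tau'.comp (tau p)) f := rfl
      _ = f := by rw [this]; rfl
  intro a b hab
  rw [← hcomp a, ← hcomp b, hab]

theorem tau_degree (f : S') : (tau p f).degree = f.degree := by
  rcases eq_or_ne f 0 with rfl | hne
  · simp
  have h1 : tau p f ≠ 0 := fun h => hne (tau_injective p (by simpa using h))
  rw [Polynomial.degree_eq_natDegree h1, Polynomial.degree_eq_natDegree hne]
  congr 1
  rw [tau_eq, Polynomial.natDegree_taylor]

theorem C_mem_adjoin (g : R') :
    Polynomial.C g ∈ Algebra.adjoin (ZMod p) {(Polynomial.C (Polynomial.X : R') : S'), Nrm p} := by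
  set phi : R' →ₐ[ZMod p] S' := IsScalarTower.toAlgHom (ZMod p) R' S' with hphi
  have hphiX : phi Polynomial.X = Polynomial.C Polynomial.X := by
    simp [hphi, IsScalarTower.toAlgHom_apply, Polynomial.algebraMap_eq]
  have h1 : Polynomial.C g ∈ Algebra.adjoin (ZMod p) ({Polynomial.C Polynomial.X} : Set S') := by
    have hg : g ∈ Algebra.adjoin (ZMod p) ({Polynomial.X} : Set R') := by
      rw [Polynomial.adjoin_X]; trivial
    have : phi g ∈ (Algebra.adjoin (ZMod p) ({Polynomial.X} : Set R')).map phi :=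
      Subalgebra.mem_map.mpr ⟨g, hg, rfl⟩
    rw [AlgHom.map_adjoin, Set.image_singleton, hphiX] at this
    have hphig : phi g = Polynomial.C g := by
      simp [hphi, IsScalarTower.toAlgHom_apply, Polynomial.algebraMap_eq]
    rwa [hphig] at this
  exact Algebra.adjoin_mono (by simp) h1

theorem fixed_mem (f : S') (hf : tau p f = f) :
    f ∈ Algebra.adjoin (ZMod p) {(Polynomial.C (Polynomial.X : R') : S'), Nrm p} := by
  have hp0 : 0 < p := (Fact.out : p.Prime).pos
  suffices H : ∀ n : ℕ, ∀ f : S', tau p f = f → f.natDegree ≤ n →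
      f ∈ Algebra.adjoin (ZMod p) {(Polynomial.C (Polynomial.X : R') : S'), Nrm p} by
    exact H f.natDegree f hf le_rfl
  intro n
  induction n using Nat.strong_induction_on with
  | _ n ih =>
    intro f hf hdeg
    rcases lt_or_ge f.natDegree p with hlt | hge
    · rw [lowdeg p f hlt hf]
      exact C_mem_adjoin p _
    · set q := f /ₘ Nrm p with hq
      set r := f %ₘ Nrm p with hr
      have heq : r + Nrm p * q = f := Polynomial.modByMonic_add_div f (Nrm p)
      have hdr : r.degree < (Nrm p).degree := Polynomial.degree_modByMonic_lt f (Nrm_monic p)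
      have hfix : f /ₘ Nrm p = tau p q ∧ f %ₘ Nrm p = tau p r := by
        apply Polynomial.div_modByMonic_unique (tau p q) (tau p r) (Nrm_monic p)
        constructor
        · have := congrArg (tau p) heq
          rw [map_add, map_mul, tau_Nrm] at this
          rw [this, hf]
        · rw [tau_degree]; exact hdr
      have hqfix : tau p q = q := (hfix.1).symm
      have hrfix : tau p r = r := (hfix.2).symm
      have hfne : f ≠ 0 := by
        intro h
        rw [h] at hge
        simp at hge
        omega
      have hqdeg : q.natDegree < n := by
        have := Polynomial.natDegree_divByMonic f (Nrm_monic p)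
        rw [Nrm_natDegree] at this
        rw [hq, this]
        omega
      have hqmem := ih q.natDegree hqdeg q hqfix le_rfl
      have hrmem : r ∈ Algebra.adjoin (ZMod p)
          {(Polynomial.C (Polynomial.X : R') : S'), Nrm p} := by
        have hrd : r.natDegree < p := by
          rcases eq_or_ne r 0 with h0 | hrne
          · rw [h0]; simpa using hp0
          · have := Polynomial.natDegree_lt_natDegree hrne (hdr.trans_le (le_of_eq rfl))
            rwa [Nrm_natDegree] at this
        rw [lowdeg p r hrd hrfix]
        exact C_mem_adjoin p _
      rw [← heq]
      exact add_mem hrmem (mul_mem (Algebra.subset_adjoin (by simp)) hqmem)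


open MvPolynomial in
/-- forward map to `F_p[α][β]`: `X 0 ↦ C X`, `X 1 ↦ X`. -/
noncomputable def fwd : MvPolynomial (Fin 2) (ZMod p) →ₐ[ZMod p] S' :=
  MvPolynomial.aeval ![Polynomial.C Polynomial.X, Polynomial.X]

open MvPolynomial in
noncomputable def bwd : S' →ₐ[ZMod p] MvPolynomial (Fin 2) (ZMod p) :=
  Polynomial.aevalTower
    (Polynomial.aevalTower (Algebra.ofId (ZMod p) _) (MvPolynomial.X 0)) (MvPolynomial.X 1)

theorem fwd_X0 : fwd p (MvPolynomial.X 0) = Polynomial.C Polynomial.X := by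
  simp [fwd]

theorem fwd_X1 : fwd p (MvPolynomial.X 1) = Polynomial.X := by
  simp [fwd]

theorem bwd_fwd (P : MvPolynomial (Fin 2) (ZMod p)) : bwd p (fwd p P) = P := by
  have h : (bwd p).comp (fwd p) = AlgHom.id _ _ := by
    apply MvPolynomial.algHom_ext
    intro i
    fin_cases i <;>
      simp [fwd, bwd, Polynomial.aevalTower_X, Polynomial.aevalTower_C]
  exact DFunLike.congr_fun h P

theorem bwd_C (r : Polynomial (ZMod p)) :
    bwd p (Polynomial.C r) = Polynomial.aeval (MvPolynomial.X 0) r := by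
  simp only [bwd, Polynomial.aevalTower_C]
  rfl

theorem comm_fwd (P : MvPolynomial (Fin 2) (ZMod p)) :
    fwd p (sigmaGen p P) = tau p (fwd p P) := by
  have h : (fwd p).comp (sigmaGen p) = ((tau p).restrictScalars (ZMod p)).comp (fwd p) := by
    apply MvPolynomial.algHom_ext
    intro i
    fin_cases i <;>
      simp [fwd, sigmaGen, tau, Polynomial.aeval_C, Polynomial.algebraMap_eq]
  exact DFunLike.congr_fun h P


open MvPolynomial in
theorem part2 (P : MvPolynomial (Fin 2) (ZMod p)) :
    sigmaGen p P = P ↔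
      P ∈ Algebra.adjoin (ZMod p)
        {(MvPolynomial.X 0 : MvPolynomial (Fin 2) (ZMod p)),
          MvPolynomial.X 1 ^ p - MvPolynomial.X 0 ^ (p - 1) * MvPolynomial.X 1} := by
  haveI : CharP (MvPolynomial (Fin 2) (ZMod p)) p :=
    charP_of_injective_algebraMap (MvPolynomial.C_injective (Fin 2) (ZMod p)) p
  have hX0p : (MvPolynomial.X 0 : MvPolynomial (Fin 2) (ZMod p)) ^ p
      = MvPolynomial.X 0 ^ (p - 1) * MvPolynomial.X 0 := by
    rw [← pow_succ]
    congr 1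
    have := (Fact.out : p.Prime).one_lt
    omega
  constructor
  · intro hP
    have hfix : tau p (fwd p P) = fwd p P := by
      rw [← comm_fwd, hP]
    have hmem := fixed_mem p (fwd p P) hfix
    have h2 : P ∈ Algebra.adjoin (ZMod p)
        (⇑(bwd p) '' {(Polynomial.C (Polynomial.X : Polynomial (ZMod p)) : S'), Nrm p}) := by
      rw [← AlgHom.map_adjoin]
      exact Subalgebra.mem_map.mpr ⟨fwd p P, hmem, bwd_fwd p P⟩
    rw [Set.image_insert_eq, Set.image_singleton] at h2
    have hb1 : bwd p (Polynomial.C (Polynomial.X : Polynomial (ZMod p)))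
        = MvPolynomial.X 0 := by
      rw [bwd_C]; simp
    have hb2 : bwd p (Nrm p)
        = MvPolynomial.X 1 ^ p - MvPolynomial.X 0 ^ (p - 1) * MvPolynomial.X 1 := by
      have hbX : bwd p Polynomial.X = MvPolynomial.X 1 := by
        simp [bwd, Polynomial.aevalTower_X]
      simp only [Nrm, map_sub, map_pow, map_mul, hbX, hb1]
    rwa [hb1, hb2] at h2
  · intro hP
    have hgen : ({(MvPolynomial.X 0 : MvPolynomial (Fin 2) (ZMod p)),
        MvPolynomial.X 1 ^ p - MvPolynomial.X 0 ^ (p - 1) * MvPolynomial.X 1} : Set _) ⊆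
        (AlgHom.equalizer (sigmaGen p) (AlgHom.id (ZMod p) _) : Set _) := by
      intro x hx
      rcases hx with rfl | hx
      · show sigmaGen p _ = _
        simp [sigmaGen]
      · rcases hx with rfl
        show sigmaGen p _ = _
        simp only [sigmaGen, map_sub, map_pow, map_mul, MvPolynomial.aeval_X, AlgHom.id_apply]
        rw [Matrix.cons_val_zero, Matrix.cons_val_one, Matrix.cons_val_zero]
        rw [add_pow_char, hX0p]
        ring
    have := Algebra.adjoin_le hgen hP
    exact this
  
open MvPolynomial in
theorem part3 (m nn : ℕ) (lam : ℕ → ZMod p) (h1m : 1 ≤ m) (hmp : m ≤ p - 1) (hmnn : m ≤ nn)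
    (hfix : sigmaGen p (∑ i ∈ Finset.Icc 1 m,
        MvPolynomial.C (lam i) * MvPolynomial.X 0 ^ (nn - i) * MvPolynomial.X 1 ^ i)
      = ∑ i ∈ Finset.Icc 1 m,
        MvPolynomial.C (lam i) * MvPolynomial.X 0 ^ (nn - i) * MvPolynomial.X 1 ^ i) :
    ∀ i ∈ Finset.Icc 1 m, lam i = 0 := by
  intro i hi
  have hp1 : 1 < p := (Fact.out : p.Prime).one_lt
  set P : MvPolynomial (Fin 2) (ZMod p) := ∑ i ∈ Finset.Icc 1 m,
      MvPolynomial.C (lam i) * MvPolynomial.X 0 ^ (nn - i) * MvPolynomial.X 1 ^ i with hP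
  have hfeq : fwd p P = ∑ j ∈ Finset.Icc 1 m,
      Polynomial.C (Polynomial.C (lam j) * Polynomial.X ^ (nn - j)) * Polynomial.X ^ j := by
    rw [hP, map_sum]
    refine Finset.sum_congr rfl fun j _ => ?_
    rw [map_mul, map_mul, map_pow, map_pow, fwd_X0, fwd_X1]
    have hc : fwd p (MvPolynomial.C (lam j)) = Polynomial.C (Polynomial.C (lam j)) := by
      rw [show (MvPolynomial.C (lam j) : MvPolynomial (Fin 2) (ZMod p))
            = algebraMap (ZMod p) _ (lam j) from rfl, AlgHom.commutes,
        Polynomial.algebraMap_apply, Polynomial.algebraMap_apply]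
      simp
    rw [hc, ← map_pow, ← map_mul]
  have hdeg : (fwd p P).natDegree < p := by
    have : (fwd p P).natDegree ≤ m := by
      rw [hfeq]
      apply Polynomial.natDegree_sum_le_of_forall_le
      intro j hj
      refine le_trans (Polynomial.natDegree_mul_le) ?_
      rw [Polynomial.natDegree_C, Polynomial.natDegree_X_pow, zero_add]
      exact (Finset.mem_Icc.mp hj).2
    omega
  have htaufix : tau p (fwd p P) = fwd p P := by
    rw [← comm_fwd, hfix]
  have hCrep := lowdeg p (fwd p P) hdeg htaufix
  have hcoeff : (fwd p P).coeff i = Polynomial.C (lam i) * Polynomial.X ^ (nn - i) := by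
    rw [hfeq, Polynomial.finset_sum_coeff]
    have hterm : ∀ j ∈ Finset.Icc 1 m,
        (Polynomial.C (Polynomial.C (lam j) * Polynomial.X ^ (nn - j))
          * Polynomial.X ^ j).coeff i
        = if i = j then Polynomial.C (lam j) * Polynomial.X ^ (nn - j) else 0 := by
      intro j _
      rw [Polynomial.coeff_C_mul, Polynomial.coeff_X_pow]
      split
      · rw [mul_one]
      · rw [mul_zero]
    rw [Finset.sum_congr rfl hterm]
    rw [Finset.sum_ite_eq, if_pos hi]
  have hzero : (fwd p P).coeff i = 0 := by
    rw [hCrep, Polynomial.coeff_C, if_neg (by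
      have := (Finset.mem_Icc.mp hi).1
      omega)]
  rw [hcoeff] at hzero
  rcases mul_eq_zero.mp hzero with h | h
  · exact Polynomial.C_eq_zero.mp h
  · exact absurd h (pow_ne_zero _ Polynomial.X_ne_zero)

end Tau

/-- For the `C_p`-action on `F_p[α, β]` with generator `α ↦ α`, `β ↦ β + α`:
the norm `∏_{i=0}^{p−1}(β + iα)` equals `β^p − α^{p−1}β`; the fixed-point subring is
generated by `α` and `β^p − α^{p−1}β`; and a homogeneous element
`∑_{i=1}^{m} λ_i α^{n−i} β^i` with `1 ≤ m ≤ p−1` is fixed only if all `λ_i = 0`. -/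
theorem stmt_17 (p : ℕ) (hp : p.Prime) (hodd : Odd p) :
    (∏ i ∈ Finset.range p, (X 1 + C (i : ZMod p) * X 0)
        = (X 1 ^ p - X 0 ^ (p - 1) * X 1 : MvPolynomial (Fin 2) (ZMod p))) ∧
    (∀ P : MvPolynomial (Fin 2) (ZMod p), sigmaGen p P = P ↔
        P ∈ Algebra.adjoin (ZMod p)
          {(X 0 : MvPolynomial (Fin 2) (ZMod p)), X 1 ^ p - X 0 ^ (p - 1) * X 1}) ∧
    (∀ (m nn : ℕ) (lam : ℕ → ZMod p), 1 ≤ m → m ≤ p - 1 → m ≤ nn →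
        sigmaGen p (∑ i ∈ Finset.Icc 1 m, C (lam i) * X 0 ^ (nn - i) * X 1 ^ i)
            = ∑ i ∈ Finset.Icc 1 m, C (lam i) * X 0 ^ (nn - i) * X 1 ^ i →
        ∀ i ∈ Finset.Icc 1 m, lam i = 0) := by
  haveI : Fact p.Prime := ⟨hp⟩
  exact ⟨part1 p, fun P => part2 p P, fun m nn lam h1 h2 h3 h4 => part3 p m nn lam h1 h2 h3 h4⟩
end

section
/- Let N = (∏_{n=1}^∞ C₄) × (∏_{n=1}^∞ C₂) and let Q = C₂ act trivially on N. Then any central extension G of N by Q whose restriction to each C₄ factor is trivial (i.e., G contains a subgroup isomorphic to C₄ mapping onto each C₄ factor) is isomorphic as a group to N itself, hence isomorphic to the split extension; in particular there exist non-equivalent extensions of N by C₂ with isomorphic total groups. -/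
/-- The abelian group `N = (∏_{n=1}^∞ C₄) × (∏_{n=1}^∞ C₂)`, written
multiplicatively. -/
abbrev NGrp : Type := (ℕ → Multiplicative (ZMod 4)) × (ℕ → Multiplicative (ZMod 2))

open Multiplicative


lemma z2_eq (x y : Multiplicative (ZMod 2)) (hx : x ≠ 1) (hy : y ≠ 1) : x = y := by
  revert x y; decide

lemma z2_sq (x : Multiplicative (ZMod 2)) : x * x = 1 := by revert x; decide

lemma z2_val_add (x y : ZMod 2) : (x + y).val % 2 = (x.val + y.val) % 2 := by revert x y; decide

lemma z4_val_add (x y : ZMod 4) : (x + y).val % 4 = (x.val + y.val) % 4 := by revert x y; decide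

lemma z4_cases (x y : ZMod 4) (h : x.val % 2 = y.val % 2) : x = y ∨ x = y + 2 := by
  revert x y; decide

lemma z4_plus2 (y : ZMod 4) : (y + 2).val % 4 = (y.val + 2) % 4 := by revert y; decide

lemma z2_toadd (x : Multiplicative (ZMod 2)) (h : x ≠ 1) : (toAdd x).val = 1 := by
  revert x; decide

lemma z2_val_inj (x y : ZMod 2) (h : x.val = y.val) : x = y := by revert x y; decide

lemma z2_pow (y x : Multiplicative (ZMod 2)) (hy : y ≠ 1) : y ^ (toAdd x).val = x := by
  revert x y; decide

def cons2 (x : Multiplicative (ZMod 2)) (b : ℕ → Multiplicative (ZMod 2)) :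
    ℕ → Multiplicative (ZMod 2)
  | 0 => x
  | (j+1) => b j

def cons4 (x : Multiplicative (ZMod 4)) (b : ℕ → Multiplicative (ZMod 4)) :
    ℕ → Multiplicative (ZMod 4)
  | 0 => x
  | (j+1) => b j

lemma part1_s18 :
    (∀ (G : Type) [Group G], ∀ (ι : NGrp →* G) (π : G →* Multiplicative (ZMod 2)),
      Function.Injective ι → Function.Surjective π → ι.range = π.ker →
      ι.range ≤ Subgroup.center G →
      (∃ t : G, π t ≠ 1 ∧ ∃ w : ℕ → Multiplicative (ZMod 2), t ^ 2 = ι (1, w)) →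
      Nonempty (G ≃* NGrp)) := by
  intro G _ ι π hinj hsurj hker hcent ⟨t, ht, w, htw⟩
  have hπι : ∀ x : NGrp, π (ι x) = 1 := by
    intro x
    have : ι x ∈ π.ker := hker ▸ ⟨x, rfl⟩
    exact this
  have hmem : ∀ g : G, π g = 1 → ∃ n, ι n = g := by
    intro g hg
    have : g ∈ ι.range := hker.symm ▸ (MonoidHom.mem_ker.mpr hg)
    exact this
  have hc : ∀ (z : NGrp) (g : G), g * ι z = ι z * g := by
    intro z g
    exact Subgroup.mem_center_iff.mp (hcent ⟨z, rfl⟩) g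
  have hmul' : ∀ (a b : ℕ) (x y : NGrp),
      (t ^ a * ι x) * (t ^ b * ι y) = t ^ (a + b) * ι (x * y) := by
    intro a b x y
    calc (t ^ a * ι x) * (t ^ b * ι y) = t ^ a * ((ι x * t ^ b) * ι y) := by
          rw [mul_assoc, mul_assoc]
      _ = t ^ a * ((t ^ b * ι x) * ι y) := by rw [← hc x (t ^ b)]
      _ = (t ^ a * t ^ b) * (ι x * ι y) := by rw [mul_assoc (t^b), ← mul_assoc, ← mul_assoc]
      _ = t ^ (a + b) * ι (x * y) := by rw [← pow_add, ← map_mul]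
  have hπt2 : (π t) ^ 2 = 1 := by rw [← map_pow, htw]; exact hπι _
  have hform : ∀ g : G, ∃ k : ℕ, k < 2 ∧ ∃ n, g = t ^ k * ι n := by
    intro g
    by_cases hg : π g = 1
    · obtain ⟨n, hn⟩ := hmem g hg
      exact ⟨0, by norm_num, n, by rw [pow_zero, one_mul, hn]⟩
    · have hgt : π g = π t := z2_eq _ _ hg ht
      have h2 : π (t⁻¹ * g) = 1 := by rw [map_mul, map_inv, hgt, inv_mul_cancel]
      obtain ⟨n, hn⟩ := hmem _ h2
      exact ⟨1, one_lt_two, n, by rw [pow_one, hn, mul_inv_cancel_left]⟩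
  have hparity : ∀ a b : ℕ, (π t) ^ a = (π t) ^ b → a % 2 = b % 2 := by
    intro a b h
    have h' : (π t) ^ (a % 2) = (π t) ^ (b % 2) := by
      rw [← pow_eq_pow_mod a hπt2, ← pow_eq_pow_mod b hπt2]; exact h
    rcases Nat.mod_two_eq_zero_or_one a with ha | ha <;>
      rcases Nat.mod_two_eq_zero_or_one b with hb | hb
    · rw [ha, hb]
    · rw [ha, hb, pow_zero, pow_one] at h'; exact absurd h'.symm ht
    · rw [ha, hb, pow_one, pow_zero] at h'; exact absurd h' ht
    · rw [ha, hb]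
  by_cases hw : w = 1
  -- Case A : w = 1, so t² = 1
  · have ht2 : t ^ 2 = 1 := by rw [htw, hw]; exact map_one ι
    set f : NGrp → G := fun p => t ^ (toAdd (p.2 0)).val * ι (p.1, fun n => p.2 (n+1)) with hf
    have hπf : ∀ p, π (f p) = (π t) ^ (toAdd (p.2 0)).val := by
      intro p; rw [hf]; simp only []
      rw [map_mul, map_pow, hπι, mul_one]
    have hfm : ∀ p q, f (p * q) = f p * f q := by
      intro p q
      show t ^ (toAdd (p.2 0) + toAdd (q.2 0)).val *
          ι (p.1 * q.1, fun n => p.2 (n+1) * q.2 (n+1)) = _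
      rw [hf]; simp only []
      rw [hmul']
      congr 1
      rw [pow_eq_pow_mod ((toAdd (p.2 0) + toAdd (q.2 0)).val) ht2,
        pow_eq_pow_mod ((toAdd (p.2 0)).val + (toAdd (q.2 0)).val) ht2, z2_val_add]
    have hfinj : Function.Injective f := by
      intro p q h
      have hπh := congrArg π h
      rw [hπf, hπf] at hπh
      have hmod := hparity _ _ hπh
      have hv : (toAdd (p.2 0)).val = (toAdd (q.2 0)).val := by
        have h1 : (toAdd (p.2 0)).val < 2 := ZMod.val_lt _
        have h2 : (toAdd (q.2 0)).val < 2 := ZMod.val_lt _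
        omega
      rw [hf] at h; simp only [] at h
      rw [hv] at h
      have h2 := hinj (mul_left_cancel h)
      have hfst := congrArg Prod.fst h2
      have hsnd := congrArg Prod.snd h2
      have hb0 : p.2 0 = q.2 0 := by
        have h3 : toAdd (p.2 0) = toAdd (q.2 0) := z2_val_inj _ _ hv
        exact toAdd.injective h3
      refine Prod.ext hfst (funext fun n => ?_)
      cases n with
      | zero => exact hb0
      | succ k => exact congrFun hsnd k
    have hfsurj : Function.Surjective f := by
      intro g
      obtain ⟨k, hk, n, hn⟩ := hform g
      refine ⟨(n.1, cons2 (ofAdd ((k : ZMod 2))) n.2), ?_⟩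
      show t ^ (toAdd (ofAdd ((k : ZMod 2)))).val * ι (n.1, fun m => cons2 (ofAdd ((k : ZMod 2))) n.2 (m+1)) = g
      rw [toAdd_ofAdd, ZMod.val_cast_of_lt hk, hn]
      exact congrArg (fun z => t ^ k * ι z) (Prod.ext rfl (funext fun m => rfl))
    exact ⟨(MulEquiv.ofBijective (MonoidHom.mk' f hfm) ⟨hfinj, hfsurj⟩).symm⟩
  · -- Case B : w ≠ 1
    obtain ⟨i, hwi⟩ : ∃ i, w i ≠ 1 := by
      by_contra hno; push_neg at hno; exact hw (funext hno)
    set W : ℕ → Multiplicative (ZMod 2) := fun j => if j = i then 1 else w j with hWd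
    set αf : (ℕ → Multiplicative (ZMod 2)) → (ℕ → Multiplicative (ZMod 2)) :=
      fun b j => b j * (W j) ^ (toAdd (b i)).val with hαd
    have hWsq : ∀ j, (W j) ^ 2 = 1 := fun j => by rw [pow_two]; exact z2_sq _
    have hαm : ∀ b c, αf (b * c) = αf b * αf c := by
      intro b c; funext j
      show (b j * c j) * (W j) ^ (toAdd (b i) + toAdd (c i)).val =
        (b j * (W j) ^ (toAdd (b i)).val) * (c j * (W j) ^ (toAdd (c i)).val)
      rw [mul_mul_mul_comm, ← pow_add]
      congr 1
      rw [pow_eq_pow_mod ((toAdd (b i) + toAdd (c i)).val) (hWsq j),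
        pow_eq_pow_mod ((toAdd (b i)).val + (toAdd (c i)).val) (hWsq j), z2_val_add]
    have hαα : ∀ b, αf (αf b) = b := by
      intro b; funext j
      have hbi : αf b i = b i := by
        show b i * (W i) ^ (toAdd (b i)).val = b i
        rw [show W i = 1 from if_pos rfl, one_pow, mul_one]
      show αf b j * (W j) ^ (toAdd (αf b i)).val = b j
      rw [hbi]
      show (b j * (W j) ^ (toAdd (b i)).val) * (W j) ^ (toAdd (b i)).val = b j
      rw [mul_assoc, ← pow_add, ← two_mul, pow_mul, hWsq, one_pow, mul_one]
    have hαinj : ∀ b c, αf b = αf c → b = c := by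
      intro b c h; rw [← hαα b, h, hαα]
    set ι' : NGrp → G := fun p => ι (p.1, αf p.2) with hι'd
    have hι'm : ∀ p q, ι' (p * q) = ι' p * ι' q := by
      intro p q
      show ι (p.1 * q.1, αf (p.2 * q.2)) = ι (p.1, αf p.2) * ι (q.1, αf q.2)
      rw [hαm, ← map_mul]
      rfl
    have hι'inj : ∀ p q, ι' p = ι' q → p = q := by
      intro p q h
      have h2 := hinj h
      rw [Prod.mk.injEq] at h2
      exact Prod.ext h2.1 (hαinj _ _ h2.2)
    have hι'range : ∀ g : G, (∃ n, ι n = g) → (∃ n, ι' n = g) := by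
      rintro g ⟨n, hn⟩
      refine ⟨(n.1, αf n.2), ?_⟩
      show ι (n.1, αf (αf n.2)) = g
      rw [hαα]; exact hn
    have hπι' : ∀ p, π (ι' p) = 1 := fun p => hπι _
    have hmul'' : ∀ (a b : ℕ) (x y : NGrp),
        (t ^ a * ι' x) * (t ^ b * ι' y) = t ^ (a + b) * ι' (x * y) := by
      intro a b x y
      show (t ^ a * ι (x.1, αf x.2)) * (t ^ b * ι (y.1, αf y.2)) =
        t ^ (a + b) * ι ((x * y).1, αf ((x * y).2))
      rw [hmul']
      have harg : ((x.1, αf x.2) : NGrp) * (y.1, αf y.2) = ((x * y).1, αf ((x * y).2)) := by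
        show ((x.1 * y.1, αf x.2 * αf y.2) : NGrp) = (x.1 * y.1, αf (x.2 * y.2))
        rw [hαm]
      rw [harg]
    set v : ℕ → Multiplicative (ZMod 2) := fun j => if j = i then w i else 1 with hvd
    have hvi : v i = w i := if_pos rfl
    have hαw : αf w = v := by
      funext j
      show w j * (W j) ^ (toAdd (w i)).val = v j
      rw [z2_toadd _ hwi, pow_one]
      by_cases hj : j = i
      · rw [hj, show W i = 1 from if_pos rfl, mul_one, hvi]
      · rw [show W j = w j from if_neg hj, show v j = 1 from if_neg hj, z2_sq]
    have htw' : t ^ 2 = ι' (1, v) := by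
      show t ^ 2 = ι (1, αf v)
      rw [← hαw, hαα]; exact htw
    have hα1 : αf (1 : ℕ → Multiplicative (ZMod 2)) = 1 := by
      funext j
      show (1 : Multiplicative (ZMod 2)) * (W j) ^ (toAdd (1 : Multiplicative (ZMod 2))).val = 1
      rw [toAdd_one, ZMod.val_zero, pow_zero, mul_one]
    have hvv : ((1, v) : NGrp) * (1, v) = 1 :=
      Prod.ext (one_mul 1) (funext fun j => z2_sq (v j))
    have ht4 : t ^ 4 = 1 := by
      have h44 : t ^ 4 = (t ^ 2) * (t ^ 2) := by rw [← pow_add]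
      rw [h44, htw', ← hι'm, hvv]
      show ι (1, αf 1) = 1
      rw [hα1]; exact map_one ι
    set e : ℕ → ℕ := fun k => if k < i then k else k + 1 with hed'
    set d : ℕ → ℕ := fun j => if j < i then j else j - 1 with hdd
    have heni : ∀ k, e k ≠ i := by
      intro k; simp only [hed']; split_ifs <;> omega
    have hde : ∀ k, d (e k) = k := by
      intro k; simp only [hed', hdd]; split_ifs <;> omega
    have hed : ∀ j, j ≠ i → e (d j) = j := by
      intro j hj; simp only [hed', hdd]; split_ifs <;> omega
    set emb : (ℕ → Multiplicative (ZMod 2)) → (ℕ → Multiplicative (ZMod 2)) :=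
      fun b j => if j = i then 1 else b (d j) with hembd
    have hembm : ∀ b c, emb (b * c) = emb b * emb c := by
      intro b c; funext j
      show (if j = i then 1 else (b (d j)) * (c (d j))) =
        (if j = i then 1 else b (d j)) * (if j = i then 1 else c (d j))
      by_cases hj : j = i
      · rw [if_pos hj, if_pos hj, if_pos hj, one_mul]
      · rw [if_neg hj, if_neg hj, if_neg hj]
    have hval : ∀ (b : ℕ → Multiplicative (ZMod 2)) k, emb b (e k) = b k := by
      intro b k
      show (if e k = i then 1 else b (d (e k))) = b k
      rw [if_neg (heni k), hde]
    set f : NGrp → G :=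
      fun p => t ^ (toAdd (p.1 0)).val * ι' (fun m => p.1 (m+1), emb p.2) with hfB
    have hπf : ∀ p, π (f p) = (π t) ^ (toAdd (p.1 0)).val := by
      intro p; rw [hfB]; simp only []
      rw [map_mul, map_pow, hπι', mul_one]
    have hfm : ∀ p q, f (p * q) = f p * f q := by
      intro p q
      show t ^ (toAdd (p.1 0) + toAdd (q.1 0)).val *
          ι' (fun m => p.1 (m+1) * q.1 (m+1), emb (p.2 * q.2)) = f p * f q
      rw [hfB]; simp only []
      rw [hmul'']
      congr 1
      · rw [pow_eq_pow_mod ((toAdd (p.1 0) + toAdd (q.1 0)).val) ht4,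
          pow_eq_pow_mod ((toAdd (p.1 0)).val + (toAdd (q.1 0)).val) ht4, z4_val_add]
      · exact congrArg ι' (Prod.ext rfl (hembm p.2 q.2))
    have hfinj : Function.Injective f := by
      intro p q h
      have hπh := congrArg π h
      rw [hπf, hπf] at hπh
      have hmod := hparity _ _ hπh
      rcases z4_cases _ _ hmod with heq | heq
      · have hval0 : (toAdd (p.1 0)).val = (toAdd (q.1 0)).val := by rw [heq]
        rw [hfB] at h; simp only [] at h
        rw [hval0] at h
        have h2 := hι'inj _ _ (mul_left_cancel h)
        have hfst := congrArg Prod.fst h2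
        have hsnd := congrArg Prod.snd h2
        refine Prod.ext (funext fun m => ?_) (funext fun k => ?_)
        · cases m with
          | zero => exact toAdd.injective heq
          | succ j => exact congrFun hfst j
        · rw [← hval p.2 k, ← hval q.2 k]
          exact congrFun hsnd (e k)
      · exfalso
        have hvv2 : t ^ (toAdd (p.1 0)).val = t ^ (toAdd (q.1 0)).val * t ^ 2 := by
          rw [heq, pow_eq_pow_mod ((toAdd (q.1 0) + 2).val) ht4, z4_plus2,
            ← pow_eq_pow_mod ((toAdd (q.1 0)).val + 2) ht4, pow_add]
        rw [hfB] at h; simp only [] at h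
        rw [hvv2, mul_assoc] at h
        have h2 := mul_left_cancel h
        rw [htw', ← hι'm] at h2
        have h3 := hι'inj _ _ h2
        have hsnd := congrFun (congrArg Prod.snd h3) i
        have h4 : v i * (if (i:ℕ) = i then 1 else p.2 (d i)) =
            (if (i:ℕ) = i then 1 else q.2 (d i)) := hsnd
        rw [if_pos rfl, if_pos rfl, mul_one, hvi] at h4
        exact hwi h4
    have hfsurj : Function.Surjective f := by
      intro g
      obtain ⟨k, hk, n0, hn0⟩ := hform g
      obtain ⟨n, hn⟩ := hι'range (ι n0) ⟨n0, rfl⟩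
      have hc2 : (toAdd (n.2 i)).val < 2 := ZMod.val_lt _
      set c : ℕ := (toAdd (n.2 i)).val with hcd
      set b0 : ℕ → Multiplicative (ZMod 2) := fun j => if j = i then 1 else n.2 j with hb0d
      have hsplit : n.2 = v ^ c * b0 := by
        funext j
        show n.2 j = (v j) ^ c * (if j = i then 1 else n.2 j)
        by_cases hj : j = i
        · rw [if_pos hj, mul_one, hj, hvi]
          exact (z2_pow _ _ hwi).symm
        · rw [if_neg hj, show v j = 1 from if_neg hj, one_pow, one_mul]
      have hembpull : emb (fun k' => n.2 (e k')) = b0 := by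
        funext j
        show (if j = i then 1 else n.2 (e (d j))) = (if j = i then 1 else n.2 j)
        by_cases hj : j = i
        · rw [if_pos hj, if_pos hj]
        · rw [if_neg hj, if_neg hj, hed j hj]
      refine ⟨(cons4 (ofAdd (((k + 2 * c : ℕ) : ZMod 4))) n.1, fun k' => n.2 (e k')), ?_⟩
      show t ^ (toAdd (ofAdd (((k + 2 * c : ℕ) : ZMod 4)))).val *
        ι' (fun m => cons4 (ofAdd (((k + 2 * c : ℕ) : ZMod 4))) n.1 (m+1),
          emb (fun k' => n.2 (e k'))) = g
      rw [toAdd_ofAdd, ZMod.val_cast_of_lt (show k + 2 * c < 4 by omega), hembpull]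
      have htail : (fun m => cons4 (ofAdd (((k + 2 * c : ℕ) : ZMod 4))) n.1 (m+1)) = n.1 :=
        funext fun m => rfl
      rw [htail, pow_add, pow_mul, htw', mul_assoc]
      have hpowc : (ι' (1, v)) ^ c * ι' (n.1, b0) = ι' n := by
        have hc01 : c = 0 ∨ c = 1 := by omega
        rcases hc01 with hc | hc
        · rw [hc, pow_zero, one_mul]
          refine congrArg ι' (Prod.ext rfl ?_)
          rw [hsplit, hc, pow_zero, one_mul]
        · rw [hc, pow_one, ← hι'm]
          refine congrArg ι' (Prod.ext (one_mul _) ?_)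
          rw [hsplit, hc, pow_one]
          rfl
      rw [hpowc, hn]
      exact hn0.symm
    exact ⟨(MulEquiv.ofBijective (MonoidHom.mk' f hfm) ⟨hfinj, hfsurj⟩).symm⟩


noncomputable def j2 : Multiplicative (ZMod 2) →* Multiplicative (ZMod 4) :=
  MonoidHom.mk' (fun x => ofAdd (2 * (toAdd x).val : ZMod 4)) (by decide)

noncomputable def r4 : Multiplicative (ZMod 4) →* Multiplicative (ZMod 2) :=
  MonoidHom.mk' (fun x => ofAdd ((toAdd x).val : ZMod 2)) (by decide)

noncomputable def iota1 : NGrp →* NGrp :=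
  MonoidHom.mk' (fun p => (p.1, fun n => if n = 0 then 1 else p.2 (n-1)))
    (by intro a b; refine Prod.ext rfl ?_; funext n; by_cases h : n = 0 <;> simp [h])

noncomputable def pi1 : NGrp →* Multiplicative (ZMod 2) :=
  MonoidHom.mk' (fun p => p.2 0) (fun a b => rfl)

noncomputable def iota2 : NGrp →* NGrp :=
  MonoidHom.mk' (fun p => (fun n => if n = 0 then j2 (p.2 0) else p.1 (n-1), fun k => p.2 (k+1)))
    (by intro a b; refine Prod.ext ?_ rfl; funext n; by_cases h : n = 0 <;> simp [h])

noncomputable def pi2 : NGrp →* Multiplicative (ZMod 2) :=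
  MonoidHom.mk' (fun p => r4 (p.1 0)) (fun a b => by simp [map_mul])

lemma part2_s18 :
    (∃ (ι₁ : NGrp →* NGrp) (π₁ : NGrp →* Multiplicative (ZMod 2))
       (ι₂ : NGrp →* NGrp) (π₂ : NGrp →* Multiplicative (ZMod 2)),
      Function.Injective ι₁ ∧ Function.Surjective π₁ ∧ ι₁.range = π₁.ker ∧
      Function.Injective ι₂ ∧ Function.Surjective π₂ ∧ ι₂.range = π₂.ker ∧
      ¬ ∃ θ : NGrp ≃* NGrp, (∀ x : NGrp, θ (ι₁ x) = ι₂ x) ∧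
          (∀ g : NGrp, π₂ (θ g) = π₁ g)) := by
  refine ⟨iota1, pi1, iota2, pi2, ?_, ?_, ?_, ?_, ?_, ?_, ?_⟩
  · intro p q h
    have h1 := congrArg Prod.fst h
    have h2 := congrArg Prod.snd h
    refine Prod.ext h1 (funext fun n => ?_)
    have := congrFun h2 (n+1)
    simpa [iota1] using this
  · intro x; exact ⟨(1, fun _ => x), rfl⟩
  · ext g
    simp only [MonoidHom.mem_range, MonoidHom.mem_ker]
    constructor
    · rintro ⟨p, rfl⟩
      show (if (0:ℕ) = 0 then (1 : Multiplicative (ZMod 2)) else p.2 (0-1)) = 1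
      rw [if_pos rfl]
    · intro h
      refine ⟨(g.1, fun k => g.2 (k+1)), ?_⟩
      refine Prod.ext rfl (funext fun n => ?_)
      cases n with
      | zero =>
        show (if (0:ℕ) = 0 then (1 : Multiplicative (ZMod 2)) else g.2 (0-1)) = g.2 0
        rw [if_pos rfl]; exact h.symm
      | succ k =>
        show (if (k+1:ℕ) = 0 then (1 : Multiplicative (ZMod 2)) else g.2 (k+1-1+1)) = g.2 (k+1)
        rw [if_neg k.succ_ne_zero]
        norm_num
  · intro p q h
    have h1 := congrArg Prod.fst h
    have h2 := congrArg Prod.snd h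
    have hj2 : Function.Injective j2 := by decide
    refine Prod.ext (funext fun n => ?_) (funext fun n => ?_)
    · have := congrFun h1 (n+1); simpa [iota2] using this
    · cases n with
      | zero => exact hj2 (by simpa [iota2] using congrFun h1 0)
      | succ k => simpa [iota2] using congrFun h2 k
  · intro x
    refine ⟨(fun _ => ofAdd ((toAdd x).val : ZMod 4), 1), ?_⟩
    show r4 (ofAdd ((toAdd x).val : ZMod 4)) = x
    revert x; decide
  · ext g
    simp only [MonoidHom.mem_range, MonoidHom.mem_ker]
    constructor
    · rintro ⟨p, rfl⟩
      show r4 (if (0:ℕ) = 0 then j2 (p.2 0) else p.1 (0-1)) = 1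
      rw [if_pos rfl]
      generalize p.2 0 = x; revert x; decide
    · intro h
      have key : ∀ z : Multiplicative (ZMod 4), r4 z = 1 → ∃ c, j2 c = z := by decide
      obtain ⟨c, hc⟩ := key (g.1 0) h
      refine ⟨(fun n => g.1 (n+1), fun k => if k = 0 then c else g.2 (k-1)), ?_⟩
      refine Prod.ext (funext fun n => ?_) (funext fun n => ?_)
      · cases n with
        | zero =>
          show (if (0:ℕ) = 0 then j2 c else g.1 (0-1+1)) = g.1 0
          rw [if_pos rfl]; exact hc
        | succ k =>
          show (if (k+1:ℕ) = 0 then j2 c else g.1 (k+1-1+1)) = g.1 (k+1)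
          rw [if_neg k.succ_ne_zero]
          norm_num
      · show (if (n+1:ℕ) = 0 then c else g.2 (n+1-1)) = g.2 n
        rw [if_neg n.succ_ne_zero]
        norm_num
  · rintro ⟨θ, hι, hπ⟩
    set g : NGrp := (1, fun n => if n = 0 then ofAdd 1 else 1) with hg
    have hg2 : g * g = 1 := by
      refine Prod.ext (one_mul 1) (funext fun n => ?_)
      show (if n = 0 then ofAdd 1 else 1) * (if n = 0 then (ofAdd 1 : Multiplicative (ZMod 2)) else 1) = 1
      by_cases h : n = 0
      · subst h; decide
      · rw [if_neg h]; exact one_mul 1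
    have hπg : pi1 g = ofAdd 1 := by simp [pi1, hg]
    have h1 : (θ g) * (θ g) = 1 := by rw [← map_mul, hg2, map_one]
    have h2 : pi2 (θ g) = ofAdd 1 := by rw [hπ, hπg]
    have h3 : (θ g).1 0 * (θ g).1 0 = 1 := congrFun (congrArg Prod.fst h1) 0
    have key : ∀ z : Multiplicative (ZMod 4), z * z = 1 → r4 z = 1 := by decide
    have := key _ h3
    rw [show pi2 (θ g) = r4 ((θ g).1 0) from rfl] at h2
    rw [this] at h2
    exact absurd h2 (by decide)

/-- (Rickard's example.)  Any central extension `1 → N → G → C₂ → 1` of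
`N = (∏ C₄) × (∏ C₂)` by `C₂` (trivial action) whose class restricts to zero in
each `H²(C₂; C₄)` factor — concretely, some lift `t` of the generator of `C₂`
satisfies `t² ∈ ι({1} × ∏ C₂)` — has total group isomorphic to `N` itself, hence
to the split extension.  In particular there exist non-equivalent extensions of
`N` by `C₂` with isomorphic total groups. -/
theorem stmt_18 :
    (∀ (G : Type) [Group G], ∀ (ι : NGrp →* G) (π : G →* Multiplicative (ZMod 2)),
      Function.Injective ι → Function.Surjective π → ι.range = π.ker →
      ι.range ≤ Subgroup.center G →
      (∃ t : G, π t ≠ 1 ∧ ∃ w : ℕ → Multiplicative (ZMod 2), t ^ 2 = ι (1, w)) →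
      Nonempty (G ≃* NGrp)) ∧
    (∃ (ι₁ : NGrp →* NGrp) (π₁ : NGrp →* Multiplicative (ZMod 2))
       (ι₂ : NGrp →* NGrp) (π₂ : NGrp →* Multiplicative (ZMod 2)),
      Function.Injective ι₁ ∧ Function.Surjective π₁ ∧ ι₁.range = π₁.ker ∧
      Function.Injective ι₂ ∧ Function.Surjective π₂ ∧ ι₂.range = π₂.ker ∧
      ¬ ∃ θ : NGrp ≃* NGrp, (∀ x : NGrp, θ (ι₁ x) = ι₂ x) ∧
          (∀ g : NGrp, π₂ (θ g) = π₁ g)) := by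
  exact ⟨part1_s18, part2_s18⟩
end
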